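/- Let k₁,...,k_m and n₁,...,n_m be positive integers and M = ⊕ᵢ I_{kᵢ} ⊗ M_{nᵢ}(ℂ) ⊆ M_d(ℂ), d = Σᵢ kᵢnᵢ. If M admits a basis of unitaries orthogonal under the normalized trace inner product (1/d)tr(AB*), then there is a constant c with nᵢ = c·kᵢ for all i. -/

import Mathlib

open Matrix Kronecker Finset

lemma kron_conjT {l m p q : Type*} (A : Matrix l m ℂ) (B : Matrix p q ℂ) :
    (A ⊗ₖ B)ᴴ = Aᴴ ⊗ₖ Bᴴ := by
  ext ⟨a, b⟩ ⟨c, e⟩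
  simp [conjTranspose_apply, kroneckerMap_apply, star_mul', mul_comm]

lemma trace_stdBasis_mul {nn : ℕ} (p q : Fin nn) (C : Matrix (Fin nn) (Fin nn) ℂ) :
    Matrix.trace (Matrix.single p q 1 * C) = C q p := by
  rw [Matrix.trace]
  rw [Finset.sum_eq_single p]
  · simp
  · intro r _ hr; simp [Matrix.diag, hr]
  · simp

lemma trace_mul_conjT {nn : ℕ} (C : Matrix (Fin nn) (Fin nn) ℂ) :
    Matrix.trace (C * Cᴴ) = ∑ p, ∑ q, C p q * (starRingEnd ℂ) (C p q) := by
  simp [Matrix.trace, Matrix.diag, Matrix.mul_apply, Matrix.conjTranspose_apply, mul_comm]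

/-- Membership in the block algebra `M = ⊕ᵢ I_{kᵢ} ⊗ M_{nᵢ}(ℂ)`. -/
def MemBlockAlg {m : ℕ} (k n : Fin m → ℕ)
    (A : Matrix ((i : Fin m) × (Fin (k i) × Fin (n i)))
      ((i : Fin m) × (Fin (k i) × Fin (n i))) ℂ) : Prop :=
  ∃ B : ∀ i, Matrix (Fin (n i)) (Fin (n i)) ℂ,
    A = Matrix.blockDiagonal' fun i => (1 : Matrix (Fin (k i)) (Fin (k i)) ℂ) ⊗ₖ B i

/-- If `M = ⊕ᵢ I_{kᵢ} ⊗ M_{nᵢ}(ℂ) ⊆ M_d(ℂ)`, `d = Σ kᵢnᵢ`, admits a basis of unitaries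
orthogonal under `(1/d)tr(AB*)`, then `nᵢ = c·kᵢ` for some constant `c` and all `i`. -/
theorem const_ratio_of_orthogonal_unitary_basis (m : ℕ) (k n : Fin m → ℕ)
    (hk : ∀ i, 0 < k i) (hn : ∀ i, 0 < n i) (d : ℕ) (hd : d = ∑ i, k i * n i)
    (hbasis : ∃ (N : ℕ) (u : Fin N → Matrix ((i : Fin m) × (Fin (k i) × Fin (n i)))
        ((i : Fin m) × (Fin (k i) × Fin (n i))) ℂ),
      (∀ a, MemBlockAlg k n (u a)) ∧
      (∀ a, u a * (u a)ᴴ = 1) ∧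
      (∀ a b, a ≠ b → (1 / (d : ℂ)) * Matrix.trace (u a * (u b)ᴴ) = 0) ∧
      LinearIndependent ℂ u ∧
      (∀ A, MemBlockAlg k n A → A ∈ Submodule.span ℂ (Set.range u))) :
    ∃ c : ℚ, ∀ i, (n i : ℚ) = c * (k i : ℚ) := by
  obtain ⟨N, u, hmem, hunit, horth, hli, hspan⟩ := hbasis
  rcases Nat.eq_zero_or_pos m with hm | hm
  · subst hm; exact ⟨0, fun i => i.elim0⟩
  have : Nonempty (Fin m) := ⟨⟨0, hm⟩⟩
  have hdpos : 0 < d := by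
    rw [hd]; exact Finset.sum_pos (fun i _ => Nat.mul_pos (hk i) (hn i)) univ_nonempty
  have hd0 : (d : ℂ) ≠ 0 := by exact_mod_cast hdpos.ne'
  choose B hB using hmem
  have hcard : (Fintype.card ((i : Fin m) × (Fin (k i) × Fin (n i))) : ℂ) = (d : ℂ) := by
    simp [Fintype.card_sigma, hd]
  have htr1 : ∀ a, Matrix.trace (u a * (u a)ᴴ) = (d : ℂ) := by
    intro a; rw [hunit a, Matrix.trace_one, hcard]
  have horth' : ∀ a b, a ≠ b → Matrix.trace (u a * (u b)ᴴ) = 0 := by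
    intro a b hab
    have h := horth a b hab
    rwa [one_div, mul_comm, mul_eq_zero, or_iff_left (inv_ne_zero hd0)] at h
  -- each block is unitary
  have hBu : ∀ a i, B a i * (B a i)ᴴ = 1 := by
    intro a i
    have h := hunit a
    rw [hB a, Matrix.blockDiagonal'_conjTranspose, ← Matrix.blockDiagonal'_mul] at h
    have h3 := congrFun (Matrix.blockDiagonal'_injective
      (h.trans Matrix.blockDiagonal'_one.symm)) i
    simp only [Pi.one_apply] at h3
    rw [kron_conjT, Matrix.conjTranspose_one, ← Matrix.mul_kronecker_mul, one_mul] at h3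
    ext p q
    have := congrFun (congrFun h3 (⟨0, hk i⟩, p)) (⟨0, hk i⟩, q)
    simpa [Matrix.kroneckerMap_apply, Matrix.one_apply, Prod.ext_iff] using this
  -- the key identity
  have hpq : ∀ (i : Fin m) (p q : Fin (n i)),
      (k i : ℂ) * ∑ b, B b i p q * (starRingEnd ℂ) (B b i p q) = (d : ℂ) := by
    intro i p q
    set S : Matrix (Fin (n i)) (Fin (n i)) ℂ := Matrix.single p q 1 with hS
    set E := Matrix.blockDiagonal' fun j =>
      (1 : Matrix (Fin (k j)) (Fin (k j)) ℂ) ⊗ₖ Pi.single (M := fun j => Matrix (Fin (n j)) (Fin (n j)) ℂ) i S j with hE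
    obtain ⟨c, hc⟩ := Submodule.mem_span_range_iff_exists_fun ℂ |>.mp (hspan E ⟨_, hE⟩)
    have trE : ∀ b, Matrix.trace (E * (u b)ᴴ) = (k i : ℂ) * (starRingEnd ℂ) (B b i p q) := by
      intro b
      rw [hE, hB b, Matrix.blockDiagonal'_conjTranspose, ← Matrix.blockDiagonal'_mul,
        Matrix.trace_blockDiagonal', Finset.sum_eq_single i]
      · rw [Pi.single_eq_same, kron_conjT, Matrix.conjTranspose_one,
          ← Matrix.mul_kronecker_mul, one_mul, Matrix.trace_kronecker, Matrix.trace_one,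
          hS, trace_stdBasis_mul, Matrix.conjTranspose_apply]
        simp
      · intro j _ hj
        rw [Pi.single_eq_of_ne hj, Matrix.kronecker_zero, Matrix.zero_mul, Matrix.trace_zero]
      · simp
    have trEE : Matrix.trace (E * Eᴴ) = (k i : ℂ) := by
      rw [hE, Matrix.blockDiagonal'_conjTranspose, ← Matrix.blockDiagonal'_mul,
        Matrix.trace_blockDiagonal', Finset.sum_eq_single i]
      · rw [Pi.single_eq_same, kron_conjT, Matrix.conjTranspose_one,
          ← Matrix.mul_kronecker_mul, one_mul, Matrix.trace_kronecker, Matrix.trace_one,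
          hS, trace_stdBasis_mul, Matrix.conjTranspose_apply]
        simp
      · intro j _ hj
        rw [Pi.single_eq_of_ne hj, Matrix.kronecker_zero, Matrix.zero_mul, Matrix.trace_zero]
      · simp
    have tEb : ∀ b, Matrix.trace (E * (u b)ᴴ) = c b * (d : ℂ) := by
      intro b
      rw [← hc, Matrix.sum_mul, Matrix.trace_sum]
      rw [Finset.sum_eq_single b]
      · rw [smul_mul_assoc, Matrix.trace_smul, htr1 b, smul_eq_mul]
      · intro a _ hab
        rw [smul_mul_assoc, Matrix.trace_smul, horth' a b hab, smul_zero]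
      · simp
    have hcb : ∀ b, c b * (d : ℂ) = (k i : ℂ) * (starRingEnd ℂ) (B b i p q) := by
      intro b; rw [← tEb b, trE b]
    have tEE2 : Matrix.trace (E * Eᴴ)
        = ∑ b, (starRingEnd ℂ) (c b) * Matrix.trace (E * (u b)ᴴ) := by
      nth_rewrite 2 [← hc]
      rw [Matrix.conjTranspose_sum, Matrix.mul_sum, Matrix.trace_sum]
      refine Finset.sum_congr rfl fun b _ => ?_
      rw [Matrix.conjTranspose_smul, Matrix.mul_smul, Matrix.trace_smul, smul_eq_mul,
        starRingEnd_apply]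
    have hki : (k i : ℂ) ≠ 0 := by exact_mod_cast (hk i).ne'
    have key : (k i : ℂ) * d
        = (k i : ℂ)^2 * ∑ b, B b i p q * (starRingEnd ℂ) (B b i p q) := by
      calc (k i : ℂ) * d = (∑ b, (starRingEnd ℂ) (c b) * Matrix.trace (E * (u b)ᴴ)) * d := by
            rw [← tEE2, trEE]
        _ = ∑ b, (starRingEnd ℂ) (c b * d) * (c b * d) := by
            rw [Finset.sum_mul]
            refine Finset.sum_congr rfl fun b _ => ?_
            rw [tEb b, map_mul (starRingEnd ℂ), map_natCast (starRingEnd ℂ)]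
            ring
        _ = ∑ b, (k i : ℂ)^2 * (B b i p q * (starRingEnd ℂ) (B b i p q)) := by
            refine Finset.sum_congr rfl fun b _ => ?_
            rw [hcb b, map_mul (starRingEnd ℂ), Complex.conj_conj, map_natCast (starRingEnd ℂ)]
            ring
        _ = _ := by rw [Finset.mul_sum]
    apply mul_left_cancel₀ hki
    linear_combination -key
  -- sum over p q
  have key2 : ∀ i : Fin m, (k i : ℂ) * ((N : ℂ) * (n i : ℂ)) = (n i : ℂ) * (n i : ℂ) * d := by
    intro i
    have h1 : ∑ b : Fin N, Matrix.trace (B b i * (B b i)ᴴ) = (N : ℂ) * (n i : ℂ) := by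
      rw [Finset.sum_congr rfl fun b _ => by rw [hBu b i, Matrix.trace_one]]
      simp [mul_comm]
    have hswap : ∑ b : Fin N, Matrix.trace (B b i * (B b i)ᴴ)
        = ∑ p, ∑ q, ∑ b : Fin N, B b i p q * (starRingEnd ℂ) (B b i p q) := by
      simp only [trace_mul_conjT]
      rw [Finset.sum_comm]
      exact Finset.sum_congr rfl fun p _ => Finset.sum_comm
    have hcol : ∀ p : Fin (n i),
        (k i : ℂ) * ∑ q, ∑ b : Fin N, B b i p q * (starRingEnd ℂ) (B b i p q)
          = (n i : ℂ) * d := by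
      intro p
      rw [Finset.mul_sum, Finset.sum_congr rfl fun q _ => hpq i p q]
      simp [mul_comm]
    calc (k i : ℂ) * ((N : ℂ) * (n i : ℂ))
        = (k i : ℂ) * ∑ b : Fin N, Matrix.trace (B b i * (B b i)ᴴ) := by rw [h1]
      _ = ∑ p : Fin (n i), ((n i : ℂ) * d) := by
          rw [hswap, Finset.mul_sum]
          exact Finset.sum_congr rfl fun p _ => hcol p
      _ = (n i : ℂ) * (n i : ℂ) * d := by
          rw [Finset.sum_const, Finset.card_fin, nsmul_eq_mul]
          ring
  -- conclude
  refine ⟨(N : ℚ) / (d : ℚ), fun i => ?_⟩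
  have hnat : k i * (N * n i) = n i * n i * d := by exact_mod_cast key2 i
  have hq : (k i : ℚ) * (N * n i) = (n i : ℚ) * n i * d := by exact_mod_cast hnat
  have hni : (n i : ℚ) ≠ 0 := by exact_mod_cast (hn i).ne'
  have hdq : (d : ℚ) ≠ 0 := by exact_mod_cast hdpos.ne'
  have hcancel : (n i : ℚ) * ((n i : ℚ) * d) = (n i : ℚ) * ((N : ℚ) * k i) := by
    linear_combination -hq
  have h5 : (n i : ℚ) * d = (N : ℚ) * k i := mul_left_cancel₀ hni hcancel
  rw [div_mul_eq_mul_div, eq_div_iff hdq]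
  linarith [h5]
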